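/- Conversely, if E is a finite set of pure states on ℂ^d whose convex hull is a Δ-net of the pure states in trace distance (every pure state is within trace distance Δ of some convex combination of elements of E), then E itself is a √Δ-net of the pure states. -/

import Mathlib

open Matrix
open scoped Kronecker ComplexOrder

noncomputable section

variable {n : Type*} [Fintype n] [DecidableEq n]

/-- Square root of a positive semidefinite matrix (0 if not PSD). -/
def msqrt (M : Matrix n n ℂ) : Matrix n n ℂ := by
  classical exact if h : M.PosSemidef then
    (h.1.eigenvectorUnitary : Matrix n n ℂ) *
      diagonal ((↑) ∘ (fun x : ℝ => Real.sqrt x) ∘ h.1.eigenvalues) *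
      (star h.1.eigenvectorUnitary : Matrix n n ℂ) else 0

/-- Trace norm ‖M‖₁ = tr √(M Mᴴ). -/
def traceNorm (M : Matrix n n ℂ) : ℝ := ((msqrt (M * Mᴴ)).trace).re

/-- Trace distance (1/2)‖ρ − σ‖₁. -/
def traceDist (ρ σ : Matrix n n ℂ) : ℝ := traceNorm (ρ - σ) / 2

/-- Uhlmann fidelity F(ρ,σ) = (tr √(√σ ρ √σ))². -/
def fidelity (ρ σ : Matrix n n ℂ) : ℝ :=
  (((msqrt (msqrt σ * ρ * msqrt σ)).trace).re) ^ 2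

/-- Density operator: positive semidefinite with unit trace. -/
def IsDensity (ρ : Matrix n n ℂ) : Prop := ρ.PosSemidef ∧ ρ.trace = 1

/-- Rank-one operator |v⟩⟨v| associated with a vector. -/
def vecState {α : Type*} (v : α → ℂ) : Matrix α α ℂ :=
  Matrix.of fun i j => v i * (starRingEnd ℂ) (v j)

/-- Pure state: |v⟩⟨v| for some unit vector v. -/
def IsPure {α : Type*} [Fintype α] (φ : Matrix α α ℂ) : Prop :=
  ∃ v : α → ℂ, (∑ i, Complex.normSq (v i)) = 1 ∧ φ = vecState v

/-- Set of separable states across the cut α : β. -/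
def SepSet (α β : Type*) [Fintype α] [Fintype β] : Set (Matrix (α × β) (α × β) ℂ) :=
  convexHull ℝ {σ | ∃ φ ψ, IsPure φ ∧ IsPure ψ ∧ σ = φ ⊗ₖ ψ}

variable {α β : Type*} [Fintype α] [Fintype β] [DecidableEq α] [DecidableEq β]

/-- Extension Γ ⊗ id of a linear map on matrices by a k-dimensional ancilla. -/
def lmapExt (Γ : Matrix α α ℂ →ₗ[ℂ] Matrix β β ℂ) (k : ℕ)
    (M : Matrix (α × Fin k) (α × Fin k) ℂ) : Matrix (β × Fin k) (β × Fin k) ℂ :=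
  Matrix.of fun im jn => Γ (Matrix.of fun p q => M (p, im.2) (q, jn.2)) im.1 jn.1

/-- Completely positive trace-preserving linear map. -/
def IsCPTP (Γ : Matrix α α ℂ →ₗ[ℂ] Matrix β β ℂ) : Prop :=
  (∀ (k : ℕ) (M : Matrix (α × Fin k) (α × Fin k) ℂ), M.PosSemidef →
    (lmapExt Γ k M).PosSemidef) ∧ (∀ M, (Γ M).trace = M.trace)

/-- Partial trace over the second tensor factor. -/
def ptrB (M : Matrix (α × β) (α × β) ℂ) : Matrix α α ℂ :=
  Matrix.of fun i j => ∑ m, M (i, m) (j, m)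

/-- Partial trace over the first tensor factor. -/
def ptrA (M : Matrix (α × β) (α × β) ℂ) : Matrix β β ℂ :=
  Matrix.of fun i j => ∑ m, M (m, i) (m, j)

/-- Choi operator J(Λ) = Σ_{i,j} |i⟩⟨j| ⊗ Λ(|i⟩⟨j|). -/
def choi (Λ : Matrix α α ℂ →ₗ[ℂ] Matrix β β ℂ) : Matrix (α × β) (α × β) ℂ :=
  Matrix.of fun p q => Λ (Matrix.single p.1 q.1 1) p.2 q.2

/-- Entanglement-breaking channel: all extended outputs are separable. -/
def IsEB (Λ : Matrix α α ℂ →ₗ[ℂ] Matrix β β ℂ) : Prop :=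
  IsCPTP Λ ∧ ∀ (k : ℕ) (ρ : Matrix (α × Fin k) (α × Fin k) ℂ), IsDensity ρ →
    lmapExt Λ k ρ ∈ SepSet β (Fin k)

set_option linter.unusedSectionVars false

def ketbra (a b : n → ℂ) : Matrix n n ℂ := Matrix.of fun i j => a i * (starRingEnd ℂ) (b j)

lemma ketbra_mul_ketbra (a b c d : n → ℂ) :
    ketbra a b * ketbra c d = (star b ⬝ᵥ c) • ketbra a d := by
  ext i j
  simp only [ketbra, Matrix.mul_apply, Matrix.smul_apply, Matrix.of_apply, dotProduct,
    Finset.sum_mul, smul_eq_mul, Pi.star_apply, RCLike.star_def]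
  exact Finset.sum_congr rfl fun k _ => by ring

lemma trace_ketbra (a b : n → ℂ) : (ketbra a b).trace = star b ⬝ᵥ a := by
  simp [ketbra, Matrix.trace, Matrix.diag, dotProduct, mul_comm]

lemma conj_dotProduct (a b : n → ℂ) : (starRingEnd ℂ) (star a ⬝ᵥ b) = star b ⬝ᵥ a := by
  simp [dotProduct, map_sum, mul_comm]

lemma ketbra_conjTranspose (a b : n → ℂ) : (ketbra a b)ᴴ = ketbra b a := by
  ext i j; simp [ketbra, conjTranspose_apply, mul_comm]

open scoped MatrixOrder in
lemma msqrt_eq {M : Matrix n n ℂ} (h : M.PosSemidef) : msqrt M = CFC.sqrt M := by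
  have e : msqrt M = (h.1.eigenvectorUnitary : Matrix n n ℂ) *
      diagonal ((↑) ∘ (fun x : ℝ => Real.sqrt x) ∘ h.1.eigenvalues) *
      (star h.1.eigenvectorUnitary : Matrix n n ℂ) := dif_pos h
  rw [e, CFC.sqrt_eq_cfc, cfc_nnreal_eq_real _ M h.nonneg, h.1.cfc_eq, IsHermitian.cfc,
    Unitary.conjStarAlgAut_apply]
  congr 3
  funext i
  simp [h.eigenvalues_nonneg i]

open scoped MatrixOrder in
lemma Matrix.PosSemidef.eq_sqrt_of_sq_eq {A B : Matrix n n ℂ} (hA : A.PosSemidef)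
    (_hB : B.PosSemidef) (h : A ^ 2 = B) : A = CFC.sqrt B :=
  (CFC.sqrt_unique (by rw [← sq]; exact h) hA.nonneg).symm

open scoped MatrixOrder in
lemma Matrix.PosSemidef.eq_of_sq_eq_sq {A B : Matrix n n ℂ} (hA : A.PosSemidef)
    (hB : B.PosSemidef) (h : A ^ 2 = B ^ 2) : A = B :=
  (CFC.mul_self_eq_mul_self_iff A B hA.nonneg hB.nonneg).mp (by rw [← sq, ← sq]; exact h)

lemma posSemidef_smul_real {M : Matrix n n ℂ} (hM : M.PosSemidef) {r : ℝ} (hr : 0 ≤ r) :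
    (((r : ℂ)) • M).PosSemidef := by
  refine Matrix.PosSemidef.of_dotProduct_mulVec_nonneg ?_ fun x => ?_
  · unfold Matrix.IsHermitian
    rw [conjTranspose_smul, hM.1.eq]
    congr 1
    simp
  · rw [smul_mulVec, dotProduct_smul, smul_eq_mul]
    have h2 := hM.dotProduct_mulVec_nonneg x
    rw [Complex.nonneg_iff] at h2 ⊢
    constructor
    · simp only [Complex.mul_re, Complex.ofReal_re, Complex.ofReal_im, zero_mul, sub_zero]
      exact mul_nonneg hr h2.1
    · simp [Complex.mul_im, ← h2.2]

lemma traceDist_vecState_le {u v : n → ℂ} (hu : star u ⬝ᵥ u = 1) (hv : star v ⬝ᵥ v = 1)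
    {Δ : ℝ} (h : 1 - Complex.normSq (star u ⬝ᵥ v) ≤ Δ) :
    traceDist (ketbra u u) (ketbra v v) ≤ Real.sqrt Δ := by
  set c : ℂ := star u ⬝ᵥ v with hc
  set r : ℝ := 1 - Complex.normSq c with hr
  set D : Matrix n n ℂ := ketbra u u - ketbra v v with hD
  have hDH : Dᴴ = D := by rw [hD, conjTranspose_sub, ketbra_conjTranspose, ketbra_conjTranspose]
  set B : Matrix n n ℂ := D * Dᴴ with hB
  have hBpsd : B.PosSemidef := posSemidef_self_mul_conjTranspose D
  have hcc : ((Complex.normSq c : ℝ) : ℂ) = c * (star v ⬝ᵥ u) := by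
    rw [← conj_dotProduct, ← hc, Complex.mul_conj]
  have hBB : B * B = ((r : ℂ)) • B := by
    rw [hB, hDH, hD]
    have : ((r : ℝ) : ℂ) = 1 - c * (star v ⬝ᵥ u) := by
      rw [hr]; push_cast; rw [hcc]
    rw [this]
    simp only [sub_mul, mul_sub, ketbra_mul_ketbra, hu, hv, one_smul, smul_mul_assoc,
      mul_smul_comm, ketbra_mul_ketbra, smul_smul]
    module
  have htrB : B.trace = ((2 * r : ℝ) : ℂ) := by
    rw [hB, hDH, hD]
    simp only [sub_mul, mul_sub, ketbra_mul_ketbra, hu, hv, one_smul]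
    rw [trace_sub, trace_sub, trace_sub, trace_smul, trace_smul, trace_ketbra, trace_ketbra,
      trace_ketbra, trace_ketbra, hu, hv]
    rw [hr]
    push_cast
    rw [hcc]
    simp only [smul_eq_mul]
    ring
  have hdiag : ∀ i, 0 ≤ B i i := by
    intro i
    have := hBpsd.dotProduct_mulVec_nonneg (Pi.single i 1)
    simpa [mulVec_single, dotProduct, Pi.single_apply, Finset.sum_ite_eq] using this
  have hge : 0 ≤ (B.trace).re := by
    rw [Matrix.trace]
    rw [Complex.re_sum]
    exact Finset.sum_nonneg fun i _ => (Complex.nonneg_iff.mp (hdiag i)).1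
  have hr0 : 0 ≤ r := by
    have : (B.trace).re = 2 * r := by rw [htrB]; simp
    linarith [this ▸ hge]
  have hgoal : traceDist (ketbra u u) (ketbra v v) = traceNorm D / 2 := by rw [hD, traceDist]
  rw [hgoal, traceNorm, ← hB]
  rcases eq_or_lt_of_le hr0 with hr0' | hr0'
  · have hB0 : B = 0 := by
      refine hBpsd.eq_of_sq_eq_sq Matrix.PosSemidef.zero ?_
      rw [pow_two, pow_two, hBB, ← hr0', mul_zero]
      simp
    rw [hB0]
    have : msqrt (0 : Matrix n n ℂ) = 0 := by
      rw [msqrt_eq Matrix.PosSemidef.zero]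
      refine (Matrix.PosSemidef.eq_sqrt_of_sq_eq Matrix.PosSemidef.zero Matrix.PosSemidef.zero ?_).symm
      rw [pow_two, mul_zero]
    rw [this]
    simp [Real.sqrt_nonneg]
  · set t : ℝ := Real.sqrt r with ht
    have ht0 : 0 < t := Real.sqrt_pos.mpr hr0'
    have ht2 : t * t = r := Real.mul_self_sqrt hr0
    set S : Matrix n n ℂ := ((t⁻¹ : ℝ) : ℂ) • B with hS
    have hSpsd : S.PosSemidef := posSemidef_smul_real hBpsd (inv_nonneg.mpr ht0.le)
    have hSsq : S ^ 2 = B := by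
      have hone : (t⁻¹ * t⁻¹ * r : ℝ) = 1 := by
        rw [← ht2]; field_simp
      rw [pow_two, hS, smul_mul_assoc, mul_smul_comm, hBB, smul_smul, smul_smul,
        ← Complex.ofReal_mul, ← Complex.ofReal_mul, hone, Complex.ofReal_one, one_smul]
    have hmsq : msqrt B = S := by
      rw [msqrt_eq hBpsd]
      exact (Matrix.PosSemidef.eq_sqrt_of_sq_eq hSpsd hBpsd hSsq).symm
    rw [hmsq, hS, trace_smul, htrB]
    have : (((t⁻¹ : ℝ) : ℂ) • ((2 * r : ℝ) : ℂ)).re = t⁻¹ * (2 * r) := by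
      rw [smul_eq_mul, ← Complex.ofReal_mul, Complex.ofReal_re]
    rw [this]
    have : t⁻¹ * (2 * r) / 2 = t := by
      rw [← ht2]; field_simp
    rw [this, ht]
    exact Real.sqrt_le_sqrt h

lemma dot_le_traceNorm_half {A : Matrix n n ℂ} (hA : A.IsHermitian) (htr : A.trace = 0)
    {v : n → ℂ} (hv : star v ⬝ᵥ v = 1) : (star v ⬝ᵥ A *ᵥ v).re ≤ traceNorm A / 2 := by
  set U : Matrix n n ℂ := (hA.eigenvectorUnitary : Matrix n n ℂ) with hU
  set lam : n → ℝ := hA.eigenvalues with hlam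
  have hUU : U * star U = 1 := (Matrix.mem_unitaryGroup_iff).mp hA.eigenvectorUnitary.2
  have hUU' : star U * U = 1 := (Matrix.mem_unitaryGroup_iff').mp hA.eigenvectorUnitary.2
  have hspec : A = U * diagonal (fun i => ((lam i : ℝ) : ℂ)) * star U := hA.spectral_theorem
  have hAH : Aᴴ = A := hA.eq
  -- conjugation product identity
  have hconj : ∀ f g : n → ℂ,
      (U * diagonal f * star U) * (U * diagonal g * star U) =
        U * diagonal (fun i => f i * g i) * star U := by
    intro f g
    simp only [Matrix.mul_assoc]
    rw [← Matrix.mul_assoc (star U) U, hUU', Matrix.one_mul, ← Matrix.mul_assoc (diagonal f),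
      diagonal_mul_diagonal]
  have htrconj : ∀ f : n → ℂ, (U * diagonal f * star U).trace = ∑ i, f i := by
    intro f
    rw [Matrix.trace_mul_cycle, hUU', Matrix.one_mul, trace_diagonal]
  set S : Matrix n n ℂ := U * diagonal (fun i => ((|lam i| : ℝ) : ℂ)) * star U with hS
  have hSpsd : S.PosSemidef := by
    rw [hS, Matrix.star_eq_conjTranspose]
    exact (posSemidef_diagonal_iff.mpr fun i =>
      Complex.zero_le_real.mpr (abs_nonneg _)).mul_mul_conjTranspose_same U
  have hSsq : S ^ 2 = A * Aᴴ := by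
    have habs : (fun i => ((|lam i| : ℝ) : ℂ) * ((|lam i| : ℝ) : ℂ))
        = fun i => ((lam i : ℝ) : ℂ) * ((lam i : ℝ) : ℂ) := by
      funext i
      rw [← Complex.ofReal_mul, ← Complex.ofReal_mul, abs_mul_abs_self]
    rw [pow_two, hAH, hS, hconj, habs, hspec, hconj]
  have hmsq : msqrt (A * Aᴴ) = S := by
    have hAApsd : (A * Aᴴ).PosSemidef := posSemidef_self_mul_conjTranspose A
    rw [msqrt_eq hAApsd]
    exact (Matrix.PosSemidef.eq_sqrt_of_sq_eq hSpsd hAApsd hSsq).symm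
  have htrS : traceNorm A = ∑ i, |lam i| := by
    rw [traceNorm, hmsq, hS, htrconj, ← Complex.ofReal_sum, Complex.ofReal_re]
  have hsum0 : ∑ i, lam i = 0 := by
    have := htr
    rw [hspec, htrconj, ← Complex.ofReal_sum] at this
    exact_mod_cast this
  set w : n → ℂ := star U *ᵥ v with hw
  set p : n → ℝ := fun i => Complex.normSq (w i) with hp
  have hstarw : star w = star v ᵥ* U := by
    rw [hw, star_mulVec, Matrix.star_eq_conjTranspose, conjTranspose_conjTranspose]
  have hp1 : ∑ i, p i = 1 := by
    have : star w ⬝ᵥ w = ((∑ i, p i : ℝ) : ℂ) := by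
      rw [Complex.ofReal_sum]
      simp [dotProduct, hp, Complex.normSq_eq_conj_mul_self]
    have h2 : star w ⬝ᵥ w = 1 := by
      rw [hstarw, hw, ← Matrix.dotProduct_mulVec, Matrix.mulVec_mulVec, hUU, Matrix.one_mulVec, hv]
    rw [h2] at this
    exact_mod_cast this.symm
  have hval : (star v ⬝ᵥ A *ᵥ v).re = ∑ i, lam i * p i := by
    have h1 : star v ⬝ᵥ A *ᵥ v = star w ⬝ᵥ (diagonal (fun i => ((lam i : ℝ) : ℂ)) *ᵥ w) := by
      conv_lhs => rw [hspec]
      rw [← Matrix.mulVec_mulVec, ← Matrix.mulVec_mulVec, Matrix.dotProduct_mulVec (star v) U,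
        ← hstarw, ← hw]
    have h2 : star w ⬝ᵥ (diagonal (fun i => ((lam i : ℝ) : ℂ)) *ᵥ w) =
        ((∑ i, lam i * p i : ℝ) : ℂ) := by
      rw [Complex.ofReal_sum]
      simp only [dotProduct, Matrix.mulVec_diagonal, hp, Pi.star_apply, RCLike.star_def]
      refine Finset.sum_congr rfl fun i _ => ?_
      rw [Complex.ofReal_mul, Complex.normSq_eq_conj_mul_self]
      ring
    rw [h1, h2, Complex.ofReal_re]
  rw [hval, htrS]
  have hpnn : ∀ i, 0 ≤ p i := fun i => Complex.normSq_nonneg _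
  have hple : ∀ i, p i ≤ 1 := by
    intro i
    calc p i ≤ ∑ j, p j := Finset.single_le_sum (fun j _ => hpnn j) (Finset.mem_univ i)
      _ = 1 := hp1
  have key : ∀ i, lam i * p i ≤ (lam i + |lam i|) / 2 := by
    intro i
    rcases le_total (lam i) 0 with hle | hle
    · have : lam i + |lam i| = 0 := by rw [abs_of_nonpos hle]; ring
      rw [this]
      simpa using mul_nonneg (neg_nonneg.mpr hle) (hpnn i)
    · have : (lam i + |lam i|) / 2 = lam i := by rw [abs_of_nonneg hle]; ring
      rw [this]
      nlinarith [hpnn i, hple i]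
  calc ∑ i, lam i * p i ≤ ∑ i, (lam i + |lam i|) / 2 :=
        Finset.sum_le_sum fun i _ => key i
    _ = ((∑ i, lam i) + ∑ i, |lam i|) / 2 := by
        rw [← Finset.sum_add_distrib, ← Finset.sum_div]
    _ = (∑ i, |lam i|) / 2 := by rw [hsum0]; ring_nf

lemma ketbra_mulVec (a b x : n → ℂ) : ketbra a b *ᵥ x = (star b ⬝ᵥ x) • a := by
  funext i
  simp only [ketbra, Matrix.mulVec, dotProduct, Matrix.of_apply, Pi.smul_apply, smul_eq_mul,
    Pi.star_apply, RCLike.star_def, Finset.sum_mul]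
  exact Finset.sum_congr rfl fun k _ => by ring

lemma re_dot_ketbra (u v : n → ℂ) :
    (star v ⬝ᵥ ketbra u u *ᵥ v).re = Complex.normSq (star u ⬝ᵥ v) := by
  rw [ketbra_mulVec, dotProduct_smul, smul_eq_mul, ← conj_dotProduct, mul_comm, Complex.mul_conj,
    Complex.ofReal_re, Complex.normSq_conj]

lemma dot_mulVec_sum {ι : Type*} (s : Finset ι) (g : ι → Matrix n n ℂ) (a b : n → ℂ) :
    a ⬝ᵥ (∑ i ∈ s, g i) *ᵥ b = ∑ i ∈ s, a ⬝ᵥ (g i) *ᵥ b := by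
  classical
  induction s using Finset.induction with
  | empty => simp
  | insert _ _ hn ih => rw [Finset.sum_insert hn, Finset.sum_insert hn, add_mulVec, dotProduct_add, ih]

lemma traceNorm_neg (M : Matrix n n ℂ) : traceNorm (-M) = traceNorm M := by
  rw [traceNorm, traceNorm]
  congr 2
  simp


lemma norm_of {u : n → ℂ} (hu : (∑ i, Complex.normSq (u i)) = 1) : star u ⬝ᵥ u = 1 := by
  have : star u ⬝ᵥ u = ((∑ i, Complex.normSq (u i) : ℝ) : ℂ) := by
    rw [Complex.ofReal_sum]
    simp [dotProduct, Complex.normSq_eq_conj_mul_self]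
  rw [this, hu, Complex.ofReal_one]

end

theorem net_of_convexHull_net {d : ℕ} {Δ : ℝ}
    (E : Finset (Matrix (Fin d) (Fin d) ℂ)) (hE : ∀ x ∈ E, IsPure x)
    (h : ∀ φ : Matrix (Fin d) (Fin d) ℂ, IsPure φ →
      ∃ q : Matrix (Fin d) (Fin d) ℂ → ℝ, (∀ x, 0 ≤ q x) ∧ (∑ x ∈ E, q x = 1) ∧
        traceDist (∑ x ∈ E, q x • x) φ ≤ Δ) :
    ∀ φ : Matrix (Fin d) (Fin d) ℂ, IsPure φ →
      ∃ x ∈ E, traceDist x φ ≤ Real.sqrt Δ := by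
  intro φ hφ
  obtain ⟨v, hv1, rfl⟩ := hφ
  have hvk : vecState v = ketbra v v := rfl
  have hv : star v ⬝ᵥ v = 1 := norm_of hv1
  obtain ⟨q, hq0, hq1, hqd⟩ := h (vecState v) ⟨v, hv1, rfl⟩
  set σ : Matrix (Fin d) (Fin d) ℂ := ∑ x ∈ E, q x • x with hσ
  have hEne : E.Nonempty := by
    by_contra hne
    rw [Finset.not_nonempty_iff_eq_empty] at hne
    subst hne
    simp at hq1
  set f : Matrix (Fin d) (Fin d) ℂ → ℝ := fun x => (star v ⬝ᵥ x *ᵥ v).re with hf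
  obtain ⟨x₀, hx₀E, hx₀max⟩ := E.exists_max_image f hEne
  -- facts about pure elements
  have hfact : ∀ x ∈ E, xᴴ = x ∧ x.trace = 1 ∧ 0 ≤ f x := by
    intro x hx
    obtain ⟨u, hu1, rfl⟩ := hE x hx
    have hu : star u ⬝ᵥ u = 1 := norm_of hu1
    refine ⟨ketbra_conjTranspose u u, ?_, ?_⟩
    · rw [show vecState u = ketbra u u from rfl, trace_ketbra, hu]
    · rw [hf]
      simp only [show vecState u = ketbra u u from rfl]
      rw [re_dot_ketbra]
      exact Complex.normSq_nonneg _
  have hσH : σᴴ = σ := by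
    rw [hσ, conjTranspose_sum]
    refine Finset.sum_congr rfl fun x hx => ?_
    rw [conjTranspose_smul, (hfact x hx).1, star_trivial]
  have hσtr : σ.trace = 1 := by
    rw [hσ, trace_sum]
    have : ∀ x ∈ E, (q x • x).trace = ((q x : ℝ) : ℂ) := by
      intro x hx
      rw [trace_smul, (hfact x hx).2.1, Complex.real_smul, mul_one]
    rw [Finset.sum_congr rfl this, ← Complex.ofReal_sum, hq1, Complex.ofReal_one]
  set A : Matrix (Fin d) (Fin d) ℂ := vecState v - σ with hA
  have hAH : A.IsHermitian := by
    unfold Matrix.IsHermitian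
    rw [hA, conjTranspose_sub, hσH, hvk, ketbra_conjTranspose]
  have hAtr : A.trace = 0 := by
    rw [hA, trace_sub, hσtr, hvk, trace_ketbra, hv, sub_self]
  have hmain := dot_le_traceNorm_half hAH hAtr hv
  have hlhs : (star v ⬝ᵥ A *ᵥ v).re = 1 - (star v ⬝ᵥ σ *ᵥ v).re := by
    have h1 : star v ⬝ᵥ vecState v *ᵥ v = 1 := by
      rw [hvk, ketbra_mulVec, dotProduct_smul, hv, one_smul]
    rw [hA, sub_mulVec, dotProduct_sub, Complex.sub_re, h1, Complex.one_re]
  have hrhs : traceNorm A = traceNorm (σ - vecState v) := by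
    rw [hA, ← traceNorm_neg (σ - vecState v), neg_sub]
  have hσv : (star v ⬝ᵥ σ *ᵥ v).re = ∑ x ∈ E, q x * f x := by
    rw [hσ, dot_mulVec_sum, Complex.re_sum]
    refine Finset.sum_congr rfl fun x hx => ?_
    rw [smul_mulVec, dotProduct_smul, hf]
    simp [Complex.real_smul, Complex.mul_re]
  have hΔ' : 1 - f x₀ ≤ Δ := by
    have h1 : ∑ x ∈ E, q x * f x ≤ f x₀ := by
      calc ∑ x ∈ E, q x * f x ≤ ∑ x ∈ E, q x * f x₀ :=
            Finset.sum_le_sum fun x hx => mul_le_mul_of_nonneg_left (hx₀max x hx) (hq0 x)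
        _ = f x₀ := by rw [← Finset.sum_mul, hq1, one_mul]
    have h2 : 1 - (star v ⬝ᵥ σ *ᵥ v).re ≤ Δ := by
      have := hmain
      rw [hlhs, hrhs] at this
      calc 1 - (star v ⬝ᵥ σ *ᵥ v).re ≤ traceNorm (σ - vecState v) / 2 := this
        _ ≤ Δ := hqd
    rw [hσv] at h2
    linarith
  obtain ⟨u, hu1, hx₀⟩ := hE x₀ hx₀E
  have hu : star u ⬝ᵥ u = 1 := norm_of hu1
  have hfx₀ : f x₀ = Complex.normSq (star u ⬝ᵥ v) := by
    rw [hf]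
    simp only [hx₀, show vecState u = ketbra u u from rfl]
    rw [re_dot_ketbra]
  refine ⟨x₀, hx₀E, ?_⟩
  rw [hx₀, hvk, show vecState u = ketbra u u from rfl]
  exact traceDist_vecState_le hu hv (by rw [← hfx₀]; exact hΔ')
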